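/- Let H be a real Hilbert space, D ⊆ H a symmetric dictionary with sup_{g∈D} ‖g‖ < ∞, γ ∈ (0,1], and u ∈ K₁(D) with u ≠ 0. Let g₁, …, g_n ∈ D, let H_m = span{g₁, …, g_m} with orthogonal projection P_m (and P₀ = 0), and set u_m = P_m u, r_m = u − u_m. Suppose g_n ∉ H_{n−1} and the weak selection condition ⟨g_n, r_{n−1}⟩ ≥ γ · sup_{g∈D} ⟨g, r_{n−1}⟩ holds. Then ‖r_n‖² ≤ ‖r_{n−1}‖² − γ² · ‖r_{n−1}‖⁴ / (‖u‖²_{K₁(D)} · ‖g_n − P_{n−1} g_n‖²). -/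

import Mathlib

open RealInnerProductSpace Pointwise

/-- `BOne D` is the closure of the convex symmetric hull of the dictionary `D`:
the closure of the set of finite linear combinations `∑ aᵢ • gᵢ` with `gᵢ ∈ D`
and `∑ |aᵢ| ≤ 1`. -/
noncomputable def BOne {H : Type*} [NormedAddCommGroup H] [InnerProductSpace ℝ H]
    (D : Set H) : Set H :=
  closure {v : H | ∃ (n : ℕ) (a : Fin n → ℝ) (g : Fin n → H),
    (∀ i, g i ∈ D) ∧ (∑ i, |a i|) ≤ 1 ∧ v = ∑ i, a i • g i}

/-- Membership in the variation space `K₁(D)`. -/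
noncomputable def memK1 {H : Type*} [NormedAddCommGroup H] [InnerProductSpace ℝ H]
    (D : Set H) (v : H) : Prop :=
  ∃ c : ℝ, 0 < c ∧ v ∈ c • BOne D

/-- The variation norm `‖v‖_{K₁(D)} = inf {c > 0 : v ∈ c • B₁(D)}`. -/
noncomputable def varNorm {H : Type*} [NormedAddCommGroup H] [InnerProductSpace ℝ H]
    (D : Set H) (v : H) : ℝ :=
  sInf {c : ℝ | 0 < c ∧ v ∈ c • BOne D}

/-- Per-step contraction estimate of the weak orthogonal greedy algorithm:
with `H_m = span{g₁,…,g_m}`, `u_m = P_m u` the orthogonal projection of `u`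
onto `H_m` (characterized by `u_m ∈ H_m` and `u - u_m ⟂ H_m`), `q = P_{n-1} g_n`,
`g_n ∉ H_{n-1}`, and the weak selection condition with parameter `γ`, one has
`‖r_n‖² ≤ ‖r_{n-1}‖² - γ² ‖r_{n-1}‖⁴ / (‖u‖²_{K₁(D)} ‖g_n - P_{n-1} g_n‖²)`. -/
theorem stmt16 {H : Type*} [NormedAddCommGroup H] [InnerProductSpace ℝ H] [CompleteSpace H]
    (D : Set H) (hsym : ∀ g ∈ D, -g ∈ D)
    (hbdd : ∃ C : ℝ, ∀ g ∈ D, ‖g‖ ≤ C)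
    (γ : ℝ) (hγ : γ ∈ Set.Ioc (0 : ℝ) 1)
    (u : H) (hu : memK1 D u) (hune : u ≠ 0)
    (n : ℕ) (hn : 1 ≤ n)
    (g : ℕ → H) (hgD : ∀ i : ℕ, 1 ≤ i → i ≤ n → g i ∈ D)
    (Hs : ℕ → Submodule ℝ H)
    (hHs : ∀ m : ℕ, Hs m = Submodule.span ℝ (g '' Set.Icc 1 m))
    -- `uu m` is the orthogonal projection of `u` onto `H_m` (note `uu 0 = 0`
    -- since `H_0 = span ∅ = ⊥`):
    (uu : ℕ → H) (huu_mem : ∀ m : ℕ, uu m ∈ Hs m)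
    (huu_orth : ∀ m : ℕ, ∀ w ∈ Hs m, ⟪u - uu m, w⟫ = 0)
    -- `q` is the orthogonal projection of `g n` onto `H_{n-1}`:
    (q : H) (hq_mem : q ∈ Hs (n - 1))
    (hq_orth : ∀ w ∈ Hs (n - 1), ⟪g n - q, w⟫ = 0)
    (hgn : g n ∉ Hs (n - 1))
    (hsel : γ * sSup ((fun g' => ⟪g', u - uu (n - 1)⟫) '' D) ≤ ⟪g n, u - uu (n - 1)⟫) :
    ‖u - uu n‖ ^ 2 ≤ ‖u - uu (n - 1)‖ ^ 2 -
      γ ^ 2 * ‖u - uu (n - 1)‖ ^ 4 / (varNorm D u ^ 2 * ‖g n - q‖ ^ 2) := by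
  classical
  obtain ⟨C, hC⟩ := hbdd
  set C' : ℝ := max C 1 with hC'def
  have hC'pos : (0:ℝ) < C' := lt_of_lt_of_le one_pos (le_max_right _ _)
  set r : H := u - uu (n - 1) with hr
  set e : H := g n - q with he
  set A : Set ℝ := {c : ℝ | 0 < c ∧ u ∈ c • BOne D} with hAdef
  obtain ⟨c₀, hc₀pos, hc₀⟩ := hu
  have hAne : A.Nonempty := ⟨c₀, hc₀pos, hc₀⟩
  -- norm bound on BOne
  have hBOne : ∀ v ∈ BOne D, ‖v‖ ≤ C' := by
    intro v hv
    have hsub : BOne D ⊆ Metric.closedBall (0:H) C' := by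
      apply closure_minimal _ Metric.isClosed_closedBall
      rintro w ⟨m, a, gg, hgg, ha, rfl⟩
      simp only [Metric.mem_closedBall, dist_zero_right]
      calc ‖∑ i, a i • gg i‖ ≤ ∑ i, ‖a i • gg i‖ := norm_sum_le _ _
        _ = ∑ i, |a i| * ‖gg i‖ := by simp [norm_smul]
        _ ≤ ∑ i, |a i| * C' := Finset.sum_le_sum (fun i _ =>
            mul_le_mul_of_nonneg_left (le_trans (hC _ (hgg i)) (le_max_left _ _)) (abs_nonneg _))
        _ = (∑ i, |a i|) * C' := by rw [Finset.sum_mul]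
        _ ≤ 1 * C' := mul_le_mul_of_nonneg_right ha hC'pos.le
        _ = C' := one_mul _
    simpa [dist_zero_right] using hsub hv
  set V : ℝ := varNorm D u with hVdef
  have hVA : V = sInf A := by rw [hVdef, varNorm]
  have hVlb : ‖u‖ / C' ≤ V := by
    rw [hVA]
    apply le_csInf hAne
    rintro c ⟨hcpos, hcmem⟩
    obtain ⟨w, hw, hwu⟩ := hcmem
    have h1 : ‖u‖ ≤ c * C' := by
      rw [← hwu, norm_smul, Real.norm_eq_abs, abs_of_pos hcpos]
      exact mul_le_mul_of_nonneg_left (hBOne w hw) hcpos.le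
    rw [div_le_iff₀ hC'pos]
    exact h1
  have hVpos : 0 < V := lt_of_lt_of_le (div_pos (norm_pos_iff.mpr hune) hC'pos) hVlb
  -- submodule facts
  have hmono : Hs (n-1) ≤ Hs n := by
    rw [hHs, hHs]
    exact Submodule.span_mono (Set.image_mono (Set.Icc_subset_Icc_right (Nat.sub_le n 1)))
  have hgn_mem : g n ∈ Hs n := by
    rw [hHs]
    exact Submodule.subset_span ⟨n, ⟨hn, le_rfl⟩, rfl⟩
  have he_mem : e ∈ Hs n := Submodule.sub_mem _ hgn_mem (hmono hq_mem)
  have hene : e ≠ 0 := by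
    intro h
    apply hgn
    have hge : g n = q := by rwa [he, sub_eq_zero] at h
    rw [hge]; exact hq_mem
  have henorm : 0 < ‖e‖ := norm_pos_iff.mpr hene
  -- orthogonality facts
  have hrq : ⟪r, q⟫ = 0 := by rw [hr]; exact huu_orth (n-1) q hq_mem
  have hru : ⟪r, uu (n-1)⟫ = 0 := by rw [hr]; exact huu_orth (n-1) _ (huu_mem (n-1))
  have hinner_gn : ⟪g n, r⟫ = ⟪e, r⟫ := by
    rw [he, inner_sub_left, real_inner_comm r q, hrq, sub_zero]
  have hur : ⟪u, r⟫ = ‖r‖^2 := by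
    have hu_eq : u = r + uu (n-1) := by rw [hr]; abel
    rw [hu_eq, inner_add_left, real_inner_comm r (uu (n-1)), hru, add_zero,
      real_inner_self_eq_norm_sq]
  -- the sup set
  set S : Set ℝ := (fun g' => ⟪g', r⟫) '' D with hSdef
  have hSne : S.Nonempty := ⟨_, ⟨g n, hgD n hn le_rfl, rfl⟩⟩
  have hSbdd : BddAbove S := by
    refine ⟨C' * ‖r‖, ?_⟩
    rintro x ⟨g', hg', rfl⟩
    calc ⟪g', r⟫ ≤ ‖g'‖ * ‖r‖ := real_inner_le_norm _ _
      _ ≤ C' * ‖r‖ := mul_le_mul_of_nonneg_right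
          (le_trans (hC _ hg') (le_max_left _ _)) (norm_nonneg _)
  have habs : ∀ g' ∈ D, |⟪g', r⟫| ≤ sSup S := by
    intro g' hg'
    rw [abs_le]
    constructor
    · have h2 := le_csSup hSbdd ⟨-g', hsym g' hg', rfl⟩
      simp only [inner_neg_left] at h2
      linarith
    · exact le_csSup hSbdd ⟨g', hg', rfl⟩
  have hSnn : 0 ≤ sSup S := le_trans (abs_nonneg _) (habs (g n) (hgD n hn le_rfl))
  -- inner product bound on BOne
  have hBinner : ∀ v ∈ BOne D, ⟪v, r⟫ ≤ sSup S := by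
    intro v hv
    have hsub : BOne D ⊆ {w : H | ⟪w, r⟫ ≤ sSup S} := by
      apply closure_minimal
      · rintro w ⟨m, a, gg, hgg, ha, rfl⟩
        simp only [Set.mem_setOf_eq, sum_inner, real_inner_smul_left]
        calc ∑ i, a i * ⟪gg i, r⟫ ≤ ∑ i, |a i| * sSup S := by
              apply Finset.sum_le_sum
              intro i _
              calc a i * ⟪gg i, r⟫ ≤ |a i * ⟪gg i, r⟫| := le_abs_self _
                _ = |a i| * |⟪gg i, r⟫| := abs_mul _ _
                _ ≤ |a i| * sSup S :=
                    mul_le_mul_of_nonneg_left (habs _ (hgg i)) (abs_nonneg _)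
          _ = (∑ i, |a i|) * sSup S := (Finset.sum_mul _ _ _).symm
          _ ≤ 1 * sSup S := mul_le_mul_of_nonneg_right ha hSnn
          _ = sSup S := one_mul _
      · exact isClosed_le (continuous_id.inner continuous_const) continuous_const
    exact hsub hv
  -- duality bound
  have hkey : ‖r‖^2 ≤ V * sSup S := by
    have hc : ∀ c ∈ A, ‖r‖^2 ≤ c * sSup S := by
      rintro c ⟨hcpos, hcmem⟩
      obtain ⟨w, hw, hwu⟩ := hcmem
      have h1 : ⟪u, r⟫ = c * ⟪w, r⟫ := by rw [← hwu, real_inner_smul_left]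
      rw [← hur, h1]
      exact mul_le_mul_of_nonneg_left (hBinner w hw) hcpos.le
    rcases eq_or_lt_of_le hSnn with h0 | hpos
    · have h1 := hc c₀ ⟨hc₀pos, hc₀⟩
      rw [← h0, mul_zero] at h1
      calc ‖r‖^2 ≤ 0 := h1
        _ ≤ V * sSup S := by rw [← h0, mul_zero]
    · have h1 : ‖r‖^2 / sSup S ≤ sInf A :=
        le_csInf hAne (fun c hcA => (div_le_iff₀ hpos).mpr (hc c hcA))
      rw [hVA]
      calc ‖r‖^2 = ‖r‖^2 / sSup S * sSup S := by field_simp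
        _ ≤ sInf A * sSup S := mul_le_mul_of_nonneg_right h1 hpos.le
  -- selection
  have hsel' : γ * ‖r‖^2 ≤ V * ⟪e, r⟫ := by
    have h1 : γ * sSup S ≤ ⟪e, r⟫ := by rw [← hinner_gn]; exact hsel
    calc γ * ‖r‖^2 ≤ γ * (V * sSup S) := mul_le_mul_of_nonneg_left hkey hγ.1.le
      _ = V * (γ * sSup S) := by ring
      _ ≤ V * ⟪e, r⟫ := mul_le_mul_of_nonneg_left h1 hVpos.le
  have hernn : 0 ≤ ⟪e, r⟫ := by
    nlinarith [hsel', hVpos, hγ.1, sq_nonneg ‖r‖]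
  -- error reduction
  set t : ℝ := ⟪e, r⟫ / ‖e‖^2 with ht
  have hw_mem : uu (n-1) + t • e ∈ Hs n :=
    Submodule.add_mem _ (hmono (huu_mem (n-1))) (Submodule.smul_mem _ _ he_mem)
  have hmin : ‖u - uu n‖^2 ≤ ‖u - (uu (n-1) + t • e)‖^2 := by
    have horth : ⟪u - uu n, uu n - (uu (n-1) + t • e)⟫ = 0 :=
      huu_orth n _ (Submodule.sub_mem _ (huu_mem n) hw_mem)
    have hsplit : u - (uu (n-1) + t • e) = (u - uu n) + (uu n - (uu (n-1) + t • e)) := by abel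
    rw [hsplit, norm_add_sq_real, horth]
    nlinarith [sq_nonneg ‖uu n - (uu (n-1) + t • e)‖]
  have hexpand : ‖u - (uu (n-1) + t • e)‖^2 = ‖r‖^2 - ⟪e, r⟫^2 / ‖e‖^2 := by
    have hsplit : u - (uu (n-1) + t • e) = r - t • e := by rw [hr]; abel
    have h2 : ‖r - t • e‖^2 = ‖r‖^2 - 2 * t * ⟪r, e⟫ + t^2 * ‖e‖^2 := by
      rw [norm_sub_sq_real, real_inner_smul_right, norm_smul, mul_pow, Real.norm_eq_abs, sq_abs]
      ring
    rw [hsplit, h2, real_inner_comm e r, ht]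
    have hne : ‖e‖^2 ≠ 0 := pow_ne_zero _ henorm.ne'
    field_simp
    ring
  have hV2pos : (0:ℝ) < V^2 * ‖e‖^2 := by positivity
  have hfinal : γ^2 * ‖r‖^4 / (V^2 * ‖e‖^2) ≤ ⟪e, r⟫^2 / ‖e‖^2 := by
    have h2' := mul_self_le_mul_self (mul_nonneg hγ.1.le (sq_nonneg ‖r‖)) hsel'
    have h2 : γ^2 * ‖r‖^4 ≤ ⟪e, r⟫^2 * V^2 := by nlinarith [h2']
    rw [div_le_div_iff₀ hV2pos (by positivity)]
    calc γ^2 * ‖r‖^4 * ‖e‖^2 ≤ (⟪e, r⟫^2 * V^2) * ‖e‖^2 :=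
          mul_le_mul_of_nonneg_right h2 (sq_nonneg _)
      _ = ⟪e, r⟫^2 * (V^2 * ‖e‖^2) := by ring
  calc ‖u - uu n‖^2 ≤ ‖r‖^2 - ⟪e, r⟫^2 / ‖e‖^2 := by rw [← hexpand]; exact hmin
    _ ≤ ‖r‖^2 - γ^2 * ‖r‖^4 / (V^2 * ‖e‖^2) := by linarith
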